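/- For the star graph S_n = K_{1,n−1} with n ≥ 2 vertices, γ_s(S_n^{1/3}) = n = |V(S_n)|, so the lower bound |V(G)| for the secure domination number of the 3-subdivision is attained. -/

import Mathlib

open SimpleGraph

/-- `D` is a dominating set of the simple graph `H`. -/
def Dominates {W : Type*} (H : SimpleGraph W) (D : Set W) : Prop :=
  ∀ v ∉ D, ∃ u ∈ D, H.Adj u v

/-- `D` is a secure dominating set of `H`: it is dominating, and every vertex outside `D`
has a neighbour `v ∈ D` whose swap keeps the set dominating. -/
def SecureDominates {W : Type*} (H : SimpleGraph W) (D : Set W) : Prop :=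
  Dominates H D ∧ ∀ u ∉ D, ∃ v ∈ D, H.Adj u v ∧ Dominates H ((D \ {v}) ∪ {u})

/-- The domination number `γ(H)`. -/
noncomputable def domNum {W : Type*} (H : SimpleGraph W) : ℕ :=
  sInf {n | ∃ D : Set W, Dominates H D ∧ D.ncard = n}

/-- The secure domination number `γₛ(H)`. -/
noncomputable def secDomNum {W : Type*} (H : SimpleGraph W) : ℕ :=
  sInf {n | ∃ D : Set W, SecureDominates H D ∧ D.ncard = n}

/-- The edges of `G`, oriented from smaller to larger endpoint. -/
abbrev OEdge {V : Type*} (G : SimpleGraph V) [LinearOrder V] : Type _ :=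
  {p : V × V // G.Adj p.1 p.2 ∧ p.1 < p.2}

/-- The `k`-subdivision `G^{1/k}` (for `k ≥ 2`): each edge `uv` (with `u < v`) is replaced by the
path `u, x₁, …, x_{k-1}, v` of length `k`, the `x_i` being new internal vertices. -/
def Subdiv {V : Type*} (G : SimpleGraph V) [LinearOrder V] (k : ℕ) :
    SimpleGraph (V ⊕ (OEdge G × Fin (k - 1))) :=
  SimpleGraph.fromRel (fun a b =>
    match a, b with
    | Sum.inl u, Sum.inr ⟨e, i⟩ => (i.val = 0 ∧ u = e.val.1) ∨ (i.val = k - 2 ∧ u = e.val.2)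
    | Sum.inr ⟨e, i⟩, Sum.inr ⟨f, j⟩ => e = f ∧ i.val + 1 = j.val
    | _, _ => False)

/-- The star graph `K_{1,n-1}` on `Fin n`, with centre `0`. -/
def starGraph (n : ℕ) : SimpleGraph (Fin n) :=
  SimpleGraph.fromRel (fun a _ => a.val = 0)

/-- `G` is a star graph: some centre is adjacent to exactly the other vertices, and there
are no other edges. -/
def IsStar {V : Type*} (G : SimpleGraph V) : Prop :=
  ∃ c : V, ∀ u v : V, G.Adj u v ↔ (u ≠ v ∧ (u = c ∨ v = c))

set_option linter.unusedSectionVars false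

section helpers
variable {n : ℕ} [NeZero n]

lemma star_adj {u v : Fin n} :
    (_root_.starGraph n).Adj u v ↔ u ≠ v ∧ (u = 0 ∨ v = 0) := by
  simp only [_root_.starGraph, SimpleGraph.fromRel_adj, Fin.ext_iff, Fin.val_zero, ne_eq]

lemma edge_spec (e : OEdge (_root_.starGraph n)) : e.val.1 = 0 ∧ e.val.2 ≠ 0 := by
  obtain ⟨⟨a, b⟩, hadj, hlt⟩ := e
  rw [star_adj] at hadj
  dsimp only at *
  rcases hadj.2 with h | h
  · subst h
    refine ⟨rfl, fun hb => ?_⟩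
    subst hb
    exact absurd hlt (by simp)
  · subst h
    exact absurd hlt (by simp)

lemma edge_eq {e f : OEdge (_root_.starGraph n)} (h : e.val.2 = f.val.2) : e = f :=
  Subtype.ext (Prod.ext (by rw [(edge_spec e).1, (edge_spec f).1]) h)

def mkE (v : Fin n) (hv : v ≠ 0) : OEdge (_root_.starGraph n) :=
  ⟨(0, v), by
    refine ⟨?_, ?_⟩
    · rw [star_adj]; exact ⟨Ne.symm hv, Or.inl rfl⟩
    · show (0 : Fin n) < v
      rw [Fin.lt_def, Fin.val_zero, Nat.pos_iff_ne_zero]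
      exact fun h => hv (Fin.ext (by simp [h]))⟩

lemma adj_inl_inr (u : Fin n) (e : OEdge (_root_.starGraph n)) (i : Fin 2) :
    (Subdiv (_root_.starGraph n) 3).Adj (Sum.inl u) (Sum.inr (e, i)) ↔
      ((i.val = 0 ∧ u = e.val.1) ∨ (i.val = 1 ∧ u = e.val.2)) := by
  simp [Subdiv, SimpleGraph.fromRel_adj]

lemma not_adj_inl_inl (u v : Fin n) :
    ¬ (Subdiv (_root_.starGraph n) 3).Adj (Sum.inl u) (Sum.inl v) := by
  simp [Subdiv, SimpleGraph.fromRel_adj]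

lemma adj_inr_inr (e f : OEdge (_root_.starGraph n)) (i j : Fin 2) :
    (Subdiv (_root_.starGraph n) 3).Adj (Sum.inr (e, i)) (Sum.inr (f, j)) ↔
      (e = f ∧ (i.val + 1 = j.val ∨ j.val + 1 = i.val)) := by
  rw [Subdiv, SimpleGraph.fromRel_adj]
  constructor
  · rintro ⟨hne, ⟨he, hij⟩ | ⟨he, hij⟩⟩
    · exact ⟨he, Or.inl hij⟩
    · exact ⟨he.symm, Or.inr hij⟩
  · rintro ⟨he, hij | hij⟩
    · refine ⟨?_, Or.inl ⟨he, hij⟩⟩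
      subst he
      simp only [ne_eq, Sum.inr.injEq, Prod.mk.injEq, not_and]
      intro _ hji
      omega
    · refine ⟨?_, Or.inr ⟨he.symm, hij⟩⟩
      subst he
      simp only [ne_eq, Sum.inr.injEq, Prod.mk.injEq, not_and]
      intro _ hji
      omega

end helpers

section main
variable {n : ℕ} [NeZero n]

/-- The secure dominating set: centre plus the subdivision vertices next to the leaves. -/
noncomputable def g (v : Fin n) : Fin n ⊕ (OEdge (_root_.starGraph n) × Fin 2) :=
  if h : v = 0 then Sum.inl 0 else Sum.inr (mkE v h, 1)

lemma g_zero : g (n := n) 0 = Sum.inl 0 := dif_pos rfl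

lemma g_ne_zero {v : Fin n} (h : v ≠ 0) : g v = Sum.inr (mkE v h, 1) := dif_neg h

lemma g_inj : Function.Injective (g (n := n)) := by
  intro a b hab
  by_cases ha : a = 0 <;> by_cases hb : b = 0
  · rw [ha, hb]
  · rw [ha, g_zero, g_ne_zero hb] at hab
    cases hab
  · rw [hb, g_zero, g_ne_zero ha] at hab
    cases hab
  · rw [g_ne_zero ha, g_ne_zero hb] at hab
    injection hab with h
    have h1 : mkE a ha = mkE b hb := congrArg Prod.fst h
    have h2 := congrArg (fun e : OEdge (_root_.starGraph n) => e.val.2) h1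
    simpa [mkE] using h2

lemma mem_range_inr {e : OEdge (_root_.starGraph n)} :
    Sum.inr (e, (1 : Fin 2)) ∈ Set.range (g (n := n)) := by
  refine ⟨e.val.2, ?_⟩
  rw [g_ne_zero (edge_spec e).2]
  congr 1
  exact congrArg (·, (1:Fin 2)) (edge_eq (by simp [mkE]))

lemma upper : SecureDominates (Subdiv (_root_.starGraph n) 3) (Set.range (g (n := n))) := by
  set H := Subdiv (_root_.starGraph n) 3 with hH
  have hdomg : ∀ (t : Fin n), t ≠ 0 → H.Adj (g t) (Sum.inl t) := by
    intro t ht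
    rw [g_ne_zero ht, H.adj_comm, hH, adj_inl_inr]
    exact Or.inr ⟨rfl, by simp [mkE]⟩
  have hdom0 : ∀ (e : OEdge (_root_.starGraph n)), H.Adj (Sum.inl (0 : Fin n)) (Sum.inr (e, (0 : Fin 2))) := by
    intro e
    rw [hH, adj_inl_inr]
    exact Or.inl ⟨rfl, (edge_spec e).1.symm⟩
  constructor
  · -- dominating
    rintro (u | ⟨e, i⟩) hw
    · by_cases hu : u = 0
      · exact absurd ⟨0, by rw [g_zero, hu]⟩ hw
      · exact ⟨g u, Set.mem_range_self u, hdomg u hu⟩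
    · fin_cases i
      · exact ⟨Sum.inl 0, by rw [← g_zero]; exact Set.mem_range_self 0, hdom0 e⟩
      · exact absurd mem_range_inr hw
  · -- secure
    rintro (u | ⟨e, i⟩) hw
    · -- leaf u (u ≠ 0 since inl 0 ∈ range g)
      have hu : u ≠ 0 := fun h => hw ⟨0, by rw [g_zero, h]⟩
      refine ⟨g u, Set.mem_range_self u, (H.adj_comm _ _).mp (hdomg u hu), ?_⟩
      rintro (t | ⟨f, j⟩) hz
      · by_cases ht : t = u
        · exact absurd (Or.inr (by rw [ht]; rfl)) hz
        · by_cases ht0 : t = 0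
          · exact absurd (Or.inl ⟨⟨0, by rw [g_zero, ht0]⟩, by
              rw [ht0, ← g_zero]
              simp only [Set.mem_singleton_iff]
              exact fun h => hu (g_inj h).symm⟩) hz
          · refine ⟨g t, Or.inl ⟨Set.mem_range_self t, ?_⟩, hdomg t ht0⟩
            simp only [Set.mem_singleton_iff]
            exact fun h => ht (g_inj h)
      · fin_cases j
        · refine ⟨Sum.inl 0, Or.inl ⟨⟨0, g_zero⟩, ?_⟩, hdom0 f⟩
          simp only [Set.mem_singleton_iff]
          exact fun h => hu (g_inj (g_zero.trans h)).symm
        · by_cases hf : f.val.2 = u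
          · refine ⟨Sum.inl u, Or.inr rfl, ?_⟩
            rw [hH, adj_inl_inr]
            exact Or.inr ⟨rfl, hf.symm⟩
          · refine absurd (Or.inl ⟨mem_range_inr, ?_⟩) hz
            simp only [Set.mem_singleton_iff]
            rw [g_ne_zero hu]
            intro h
            simp only [Sum.inr.injEq, Prod.mk.injEq] at h
            exact hf (by rw [h.1]; simp [mkE])
    · fin_cases i
      · -- subdivision vertex next to the centre
        refine ⟨Sum.inl 0, ⟨0, g_zero⟩, (H.adj_comm _ _).mp (hdom0 e), ?_⟩
        rintro (t | ⟨f, j⟩) hz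
        · by_cases ht : t = 0
          · refine ⟨Sum.inr (e, 0), Or.inr rfl, ?_⟩
            rw [ht, H.adj_comm, hH, adj_inl_inr]
            exact Or.inl ⟨rfl, (edge_spec e).1.symm⟩
          · refine ⟨g t, Or.inl ⟨Set.mem_range_self t, ?_⟩, hdomg t ht⟩
            simp [g_ne_zero ht]
        · fin_cases j
          · by_cases hf : f = e
            · exact absurd (Or.inr (by rw [hf]; rfl)) hz
            · refine ⟨Sum.inr (f, 1), Or.inl ⟨mem_range_inr, by simp⟩, ?_⟩
              rw [hH, adj_inr_inr]
              exact ⟨rfl, Or.inr rfl⟩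
          · exact absurd (Or.inl ⟨mem_range_inr, by simp⟩) hz
      · exact absurd mem_range_inr hw

lemma lower {D : Set (Fin n ⊕ (OEdge (_root_.starGraph n) × Fin 2))}
    (hD : Dominates (Subdiv (_root_.starGraph n) 3) D) : n ≤ D.ncard := by
  have hex : ∀ v : Fin n, ∃ w, w ∈ D ∧
      ((v = 0 ∧ (w = Sum.inl 0 ∨ ∃ e : OEdge (_root_.starGraph n), w = Sum.inr (e, (0 : Fin 2)))) ∨
       (v ≠ 0 ∧ (w = Sum.inl v ∨
          ∃ e : OEdge (_root_.starGraph n), e.val.2 = v ∧ w = Sum.inr (e, (1 : Fin 2))))) := by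
    intro v
    by_cases hv : v = 0
    · by_cases h0 : Sum.inl (0 : Fin n) ∈ D
      · exact ⟨Sum.inl 0, h0, Or.inl ⟨hv, Or.inl rfl⟩⟩
      · obtain ⟨u, hu, hadj⟩ := hD _ h0
        refine ⟨u, hu, Or.inl ⟨hv, ?_⟩⟩
        rcases u with t | ⟨e, i⟩
        · exact absurd hadj (not_adj_inl_inl t 0)
        · rw [(Subdiv (_root_.starGraph n) 3).adj_comm, adj_inl_inr] at hadj
          rcases hadj with ⟨hi, _⟩ | ⟨_, h2⟩
          · exact Or.inr ⟨e, by rw [show i = (0 : Fin 2) from Fin.ext hi]⟩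
          · exact absurd h2.symm (edge_spec e).2
    · by_cases h0 : Sum.inl v ∈ D
      · exact ⟨Sum.inl v, h0, Or.inr ⟨hv, Or.inl rfl⟩⟩
      · obtain ⟨u, hu, hadj⟩ := hD _ h0
        refine ⟨u, hu, Or.inr ⟨hv, ?_⟩⟩
        rcases u with t | ⟨e, i⟩
        · exact absurd hadj (not_adj_inl_inl t v)
        · rw [(Subdiv (_root_.starGraph n) 3).adj_comm, adj_inl_inr] at hadj
          rcases hadj with ⟨_, h2⟩ | ⟨hi, h2⟩
          · exact absurd (h2 ▸ (edge_spec e).1) hv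
          · exact Or.inr ⟨e, h2.symm, by rw [show i = (1 : Fin 2) from Fin.ext hi]⟩
  choose f hfD hftag using hex
  have hinj : Function.Injective f := by
    intro a b hab
    rcases hftag a with ⟨ha, hwa⟩ | ⟨ha, hwa⟩ <;> rcases hftag b with ⟨hb, hwb⟩ | ⟨hb, hwb⟩
    · rw [ha, hb]
    · exfalso
      rcases hwa with h1 | ⟨e, h1⟩ <;> rcases hwb with h2 | ⟨e', h2', h2⟩ <;>
          rw [h1, h2] at hab
      · exact hb (Sum.inl.inj hab).symm
      · cases hab
      · cases hab
      · have h3 : (0 : Fin 2) = 1 := congrArg Prod.snd (Sum.inr.inj hab)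
        exact absurd h3 (by decide)
    · exfalso
      rcases hwa with h1 | ⟨e, h1', h1⟩ <;> rcases hwb with h2 | ⟨e', h2⟩ <;>
          rw [h1, h2] at hab
      · exact ha (Sum.inl.inj hab)
      · cases hab
      · cases hab
      · have h3 : (1 : Fin 2) = 0 := congrArg Prod.snd (Sum.inr.inj hab)
        exact absurd h3 (by decide)
    · rcases hwa with h1 | ⟨e, h1', h1⟩ <;> rcases hwb with h2 | ⟨e', h2', h2⟩ <;>
          rw [h1, h2] at hab
      · exact Sum.inl.inj hab
      · cases hab
      · cases hab
      · have he : e = e' := congrArg Prod.fst (Sum.inr.inj hab)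
        rw [← h1', ← h2', he]
  calc n = (Set.range f).ncard := by
        rw [← Set.image_univ, Set.ncard_image_of_injective _ hinj, Set.ncard_univ,
          Nat.card_eq_fintype_card, Fintype.card_fin]
    _ ≤ D.ncard := Set.ncard_le_ncard (Set.range_subset_iff.mpr hfD) (Set.toFinite D)

end main


/-- For the star `Sₙ = K_{1,n-1}` with `n ≥ 2` vertices,
`γₛ(Sₙ^{1/3}) = n = |V(Sₙ)|`. -/
theorem stmt_7 (n : ℕ) (hn : 2 ≤ n) :
    secDomNum (Subdiv (_root_.starGraph n) 3) = n := by
  haveI : NeZero n := ⟨by omega⟩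
  have hcard : (Set.range (g (n := n))).ncard = n := by
    rw [← Set.image_univ, Set.ncard_image_of_injective _ g_inj, Set.ncard_univ,
      Nat.card_eq_fintype_card, Fintype.card_fin]
  have hmem : n ∈ {m | ∃ D, SecureDominates (Subdiv (_root_.starGraph n) 3) D ∧ D.ncard = m} :=
    ⟨Set.range g, upper, hcard⟩
  refine le_antisymm (Nat.sInf_le hmem) (le_csInf ⟨n, hmem⟩ ?_)
  rintro m ⟨D, hD, rfl⟩
  exact lower hD.1
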